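/- arXiv:1705.08880 — 2 statements merged into one kernel-verified Lean document; each statement's English description precedes it below -/
import Mathlib

section
/- Let a > 0 and let u be a 1-form in H^1(B_O(1)) on the hyperbolic plane H^2(-a^2), with pullback u^♯ to the Poincaré disk via the chart Y. Then the Euclidean Dirichlet energy of u^♯ on the disk of radius tanh(a/2) satisfies ||∇^{R²} u^♯||²_{L²(D₀(tanh(a/2)))} ≤ 32·{ (1/a²)·cosh⁴(a/2)·||∇u||²_{L²(B_O(1))} + sinh²(a)·||u||²_{L²(B_O(1))} }. -/
open Real MeasureTheory

/-- Euclidean disk of radius r centered at the origin of ℝ × ℝ. -/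
def disk (r : ℝ) : Set (ℝ × ℝ) := {y | y.1 ^ 2 + y.2 ^ 2 < r ^ 2}

/-- Euclidean partial derivatives on ℝ × ℝ. -/
noncomputable def pd1 (f : ℝ × ℝ → ℝ) (y : ℝ × ℝ) : ℝ := fderiv ℝ f y (1, 0)
noncomputable def pd2 (f : ℝ × ℝ → ℝ) (y : ℝ × ℝ) : ℝ := fderiv ℝ f y (0, 1)

/-- Components of the covariant derivative ∇u of the 1-form u = u₁dY¹ + u₂dY² in the
Poincaré disk chart (with respect to the frame dYʲ ⊗ dYᵏ). -/
noncomputable def cov11 (u₁ u₂ : ℝ × ℝ → ℝ) (y : ℝ × ℝ) : ℝ :=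
  pd1 u₁ y - 2 * y.1 * u₁ y / (1 - (y.1 ^ 2 + y.2 ^ 2)) + 2 * y.2 * u₂ y / (1 - (y.1 ^ 2 + y.2 ^ 2))
noncomputable def cov12 (u₁ u₂ : ℝ × ℝ → ℝ) (y : ℝ × ℝ) : ℝ :=
  pd1 u₂ y - 2 * y.2 * u₁ y / (1 - (y.1 ^ 2 + y.2 ^ 2)) - 2 * y.1 * u₂ y / (1 - (y.1 ^ 2 + y.2 ^ 2))
noncomputable def cov21 (u₁ u₂ : ℝ × ℝ → ℝ) (y : ℝ × ℝ) : ℝ :=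
  pd2 u₁ y - 2 * y.2 * u₁ y / (1 - (y.1 ^ 2 + y.2 ^ 2)) - 2 * y.1 * u₂ y / (1 - (y.1 ^ 2 + y.2 ^ 2))
noncomputable def cov22 (u₁ u₂ : ℝ × ℝ → ℝ) (y : ℝ × ℝ) : ℝ :=
  pd2 u₂ y + 2 * y.1 * u₁ y / (1 - (y.1 ^ 2 + y.2 ^ 2)) - 2 * y.2 * u₂ y / (1 - (y.1 ^ 2 + y.2 ^ 2))

set_option maxHeartbeats 1000000 in
/-- Pointwise algebraic core of Lemma 3.1. -/
lemma pt_alg_aux (C S s x y1 y2 u1 u2 p11 p12 p21 p22 v11 v12 v21 v22 : ℝ)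
    (hs : 0 < s) (hCS : C^2 - S^2 = 1) (hc : 1 ≤ C^2*s)
    (hxs : x = 1 - s) (hx : x = y1^2 + y2^2)
    (e11 : p11 = v11 + (2*y1*u1 - 2*y2*u2)/s)
    (e12 : p12 = v12 + (2*y2*u1 + 2*y1*u2)/s)
    (e21 : p21 = v21 + (2*y2*u1 + 2*y1*u2)/s)
    (e22 : p22 = v22 + (2*y2*u2 - 2*y1*u1)/s) :
    p11^2+p12^2+p21^2+p22^2 ≤ 8*C^4*s^2*(v11^2+v12^2+v21^2+v22^2)
      + 128*S^2*C^2*(u1^2+u2^2) := by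
  set w1 := (2*y1*u1 - 2*y2*u2)/s with hw1
  set w2 := (2*y2*u1 + 2*y1*u2)/s with hw2
  set w3 := (2*y2*u2 - 2*y1*u1)/s with hw3
  have h1 : p11^2 ≤ 2*v11^2 + 2*w1^2 := by rw [e11]; nlinarith [sq_nonneg (v11 - w1)]
  have h2 : p12^2 ≤ 2*v12^2 + 2*w2^2 := by rw [e12]; nlinarith [sq_nonneg (v12 - w2)]
  have h3 : p21^2 ≤ 2*v21^2 + 2*w2^2 := by rw [e21]; nlinarith [sq_nonneg (v21 - w2)]
  have h4 : p22^2 ≤ 2*v22^2 + 2*w3^2 := by rw [e22]; nlinarith [sq_nonneg (v22 - w3)]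
  have hQ : (0:ℝ) ≤ u1^2 + u2^2 := by positivity
  have hw : w1^2 + w2^2 + w2^2 + w3^2 = (8*x*(u1^2+u2^2))/s^2 := by
    rw [hw1, hw2, hw3, div_pow, div_pow, div_pow, ← add_div, ← add_div,
      ← add_div, hx]
    congr 1
    ring
  have hs1 : s ≤ 1 := by nlinarith [sq_nonneg y1, sq_nonneg y2]
  have key : (0:ℝ) ≤ (C^2*s - 1)*(C^2*s + 1 - s) :=
    mul_nonneg (by linarith) (by linarith)
  have hxb : x ≤ S^2*C^2*s^2 := by
    have hS : S^2 = C^2 - 1 := by linarith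
    rw [hS]
    nlinarith [key]
  have h16 : (8*x*(u1^2+u2^2))/s^2 ≤ 8*(S^2*C^2)*(u1^2+u2^2) := by
    rw [div_le_iff₀ (by positivity)]
    nlinarith [mul_le_mul_of_nonneg_right hxb hQ]
  have hc2 : 1 ≤ C^4*s^2 := by nlinarith
  have hV : (0:ℝ) ≤ v11^2+v12^2+v21^2+v22^2 := by positivity
  have hVb : 2*(v11^2+v12^2+v21^2+v22^2) ≤ 8*C^4*s^2*(v11^2+v12^2+v21^2+v22^2) := by
    nlinarith [mul_le_mul_of_nonneg_right hc2 hV]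
  have hSC : (0:ℝ) ≤ S^2*C^2*(u1^2+u2^2) := by positivity
  linarith [h1, h2, h3, h4, h16, hVb, hSC]

set_option maxHeartbeats 1000000 in
/-- The squared hyperbolic pointwise norm |∇u|ₐ², written in the chart:
|∇u|ₐ² = (a²(1-|y|²)²/4)² Σᵢⱼ covᵢⱼ², so that ∫_{B_O(1)} |∇u|ₐ² dVol equals
∫_{D₀(tanh(a/2))} (a²(1-|y|²)²/4)·Σᵢⱼ covᵢⱼ² dy (the conformal volume factor is
4/(a²(1-|y|²)²)).  Likewise ∫_{B_O(1)} |u|ₐ² dVol = ∫_{D₀(tanh(a/2))} (u₁²+u₂²) dy.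

Lemma 3.1: ‖∇^{ℝ²}u^♯‖²_{L²(D₀(tanh(a/2)))} ≤ 32{ (1/a²)cosh⁴(a/2)‖∇u‖²_{L²(B_O(1))}
+ sinh²a·‖u‖²_{L²(B_O(1))} }. -/
theorem stmt_12 (a : ℝ) (ha : 0 < a) (u₁ u₂ : ℝ × ℝ → ℝ)
    (hu₁ : DifferentiableOn ℝ u₁ (disk (Real.tanh (a / 2))))
    (hu₂ : DifferentiableOn ℝ u₂ (disk (Real.tanh (a / 2))))
    (hint1 : IntegrableOn
      (fun y => (pd1 u₁ y) ^ 2 + (pd1 u₂ y) ^ 2 + (pd2 u₁ y) ^ 2 + (pd2 u₂ y) ^ 2)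
      (disk (Real.tanh (a / 2))))
    (hint2 : IntegrableOn
      (fun y => (a ^ 2 * (1 - (y.1 ^ 2 + y.2 ^ 2)) ^ 2 / 4) *
        ((cov11 u₁ u₂ y) ^ 2 + (cov12 u₁ u₂ y) ^ 2 + (cov21 u₁ u₂ y) ^ 2 + (cov22 u₁ u₂ y) ^ 2))
      (disk (Real.tanh (a / 2))))
    (hint3 : IntegrableOn (fun y => (u₁ y) ^ 2 + (u₂ y) ^ 2) (disk (Real.tanh (a / 2)))) :
    (∫ y in disk (Real.tanh (a / 2)),
        ((pd1 u₁ y) ^ 2 + (pd1 u₂ y) ^ 2 + (pd2 u₁ y) ^ 2 + (pd2 u₂ y) ^ 2))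
      ≤ 32 * ((1 / a ^ 2) * Real.cosh (a / 2) ^ 4 *
            (∫ y in disk (Real.tanh (a / 2)),
              (a ^ 2 * (1 - (y.1 ^ 2 + y.2 ^ 2)) ^ 2 / 4) *
                ((cov11 u₁ u₂ y) ^ 2 + (cov12 u₁ u₂ y) ^ 2 +
                  (cov21 u₁ u₂ y) ^ 2 + (cov22 u₁ u₂ y) ^ 2))
          + Real.sinh a ^ 2 *
            (∫ y in disk (Real.tanh (a / 2)), ((u₁ y) ^ 2 + (u₂ y) ^ 2))) := by
  set D := disk (Real.tanh (a / 2)) with hD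
  set C := Real.cosh (a / 2) with hCdef
  set S := Real.sinh (a / 2) with hSdef
  have hCpos : 0 < C := by rw [hCdef]; exact Real.cosh_pos _
  have hCS : C ^ 2 - S ^ 2 = 1 := Real.cosh_sq_sub_sinh_sq (a / 2)
  have hsinh : Real.sinh a = 2 * S * C := by
    rw [show a = 2 * (a / 2) by ring, Real.sinh_two_mul, hSdef, hCdef]
  set c1 : ℝ := 32 * (1 / a ^ 2) * C ^ 4 with hc1
  set c2 : ℝ := 32 * Real.sinh a ^ 2 with hc2
  -- the pointwise bound
  have hpt : ∀ y ∈ D,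
      (pd1 u₁ y) ^ 2 + (pd1 u₂ y) ^ 2 + (pd2 u₁ y) ^ 2 + (pd2 u₂ y) ^ 2 ≤
      c1 * ((a ^ 2 * (1 - (y.1 ^ 2 + y.2 ^ 2)) ^ 2 / 4) *
        ((cov11 u₁ u₂ y) ^ 2 + (cov12 u₁ u₂ y) ^ 2 + (cov21 u₁ u₂ y) ^ 2 + (cov22 u₁ u₂ y) ^ 2))
      + c2 * ((u₁ y) ^ 2 + (u₂ y) ^ 2) := by
    intro y hy
    have hy' : y.1 ^ 2 + y.2 ^ 2 < S ^ 2 / C ^ 2 := by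
      have : Real.tanh (a / 2) ^ 2 = S ^ 2 / C ^ 2 := by
        rw [Real.tanh_eq_sinh_div_cosh, div_pow, hSdef, hCdef]
      have hym : y.1 ^ 2 + y.2 ^ 2 < Real.tanh (a / 2) ^ 2 := hy
      linarith
    have hxC : (y.1 ^ 2 + y.2 ^ 2) * C ^ 2 < S ^ 2 :=
      (lt_div_iff₀ (by positivity)).mp hy'
    have hs : 0 < 1 - (y.1 ^ 2 + y.2 ^ 2) := by
      have hlt1 : S ^ 2 / C ^ 2 < 1 := (div_lt_one (by positivity)).mpr (by nlinarith)
      linarith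
    have hc : 1 ≤ C ^ 2 * (1 - (y.1 ^ 2 + y.2 ^ 2)) := by nlinarith
    have e11 : pd1 u₁ y = cov11 u₁ u₂ y
        + (2 * y.1 * u₁ y - 2 * y.2 * u₂ y) / (1 - (y.1 ^ 2 + y.2 ^ 2)) := by
      unfold cov11; ring
    have e12 : pd1 u₂ y = cov12 u₁ u₂ y
        + (2 * y.2 * u₁ y + 2 * y.1 * u₂ y) / (1 - (y.1 ^ 2 + y.2 ^ 2)) := by
      unfold cov12; ring
    have e21 : pd2 u₁ y = cov21 u₁ u₂ y
        + (2 * y.2 * u₁ y + 2 * y.1 * u₂ y) / (1 - (y.1 ^ 2 + y.2 ^ 2)) := by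
      unfold cov21; ring
    have e22 : pd2 u₂ y = cov22 u₁ u₂ y
        + (2 * y.2 * u₂ y - 2 * y.1 * u₁ y) / (1 - (y.1 ^ 2 + y.2 ^ 2)) := by
      unfold cov22; ring
    have main := pt_alg_aux C S (1 - (y.1 ^ 2 + y.2 ^ 2)) (y.1 ^ 2 + y.2 ^ 2)
      y.1 y.2 (u₁ y) (u₂ y) (pd1 u₁ y) (pd1 u₂ y) (pd2 u₁ y) (pd2 u₂ y)
      (cov11 u₁ u₂ y) (cov12 u₁ u₂ y) (cov21 u₁ u₂ y) (cov22 u₁ u₂ y)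
      hs hCS hc (by ring) rfl e11 e12 e21 e22
    have hrw : c1 * ((a ^ 2 * (1 - (y.1 ^ 2 + y.2 ^ 2)) ^ 2 / 4) *
        ((cov11 u₁ u₂ y) ^ 2 + (cov12 u₁ u₂ y) ^ 2 + (cov21 u₁ u₂ y) ^ 2 + (cov22 u₁ u₂ y) ^ 2))
        + c2 * ((u₁ y) ^ 2 + (u₂ y) ^ 2)
        = 8 * C ^ 4 * (1 - (y.1 ^ 2 + y.2 ^ 2)) ^ 2 *
            ((cov11 u₁ u₂ y) ^ 2 + (cov12 u₁ u₂ y) ^ 2 + (cov21 u₁ u₂ y) ^ 2 + (cov22 u₁ u₂ y) ^ 2)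
          + 128 * S ^ 2 * C ^ 2 * ((u₁ y) ^ 2 + (u₂ y) ^ 2) := by
      rw [hc1, hc2, hsinh]
      field_simp
      ring
    rw [hrw]
    linarith [main]
  have hDm : MeasurableSet D := by
    have : D = (fun y : ℝ × ℝ => y.1 ^ 2 + y.2 ^ 2) ⁻¹' Set.Iio (Real.tanh (a / 2) ^ 2) := rfl
    rw [this]
    exact measurableSet_preimage (by fun_prop) measurableSet_Iio
  have hg : IntegrableOn (fun y =>
      c1 * ((a ^ 2 * (1 - (y.1 ^ 2 + y.2 ^ 2)) ^ 2 / 4) *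
        ((cov11 u₁ u₂ y) ^ 2 + (cov12 u₁ u₂ y) ^ 2 + (cov21 u₁ u₂ y) ^ 2 + (cov22 u₁ u₂ y) ^ 2))
      + c2 * ((u₁ y) ^ 2 + (u₂ y) ^ 2)) D :=
    (hint2.const_mul c1).add (hint3.const_mul c2)
  have h := setIntegral_mono_on hint1 hg hDm hpt
  rw [integral_add (hint2.const_mul c1) (hint3.const_mul c2), integral_const_mul,
    integral_const_mul] at h
  have hring : 32 * ((1 / a ^ 2) * C ^ 4 *
      (∫ y in D, (a ^ 2 * (1 - (y.1 ^ 2 + y.2 ^ 2)) ^ 2 / 4) *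
        ((cov11 u₁ u₂ y) ^ 2 + (cov12 u₁ u₂ y) ^ 2 + (cov21 u₁ u₂ y) ^ 2 + (cov22 u₁ u₂ y) ^ 2))
      + Real.sinh a ^ 2 * (∫ y in D, ((u₁ y) ^ 2 + (u₂ y) ^ 2)))
      = c1 * (∫ y in D, (a ^ 2 * (1 - (y.1 ^ 2 + y.2 ^ 2)) ^ 2 / 4) *
        ((cov11 u₁ u₂ y) ^ 2 + (cov12 u₁ u₂ y) ^ 2 + (cov21 u₁ u₂ y) ^ 2 + (cov22 u₁ u₂ y) ^ 2))
        + c2 * (∫ y in D, ((u₁ y) ^ 2 + (u₂ y) ^ 2)) := by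
    rw [hc1, hc2]; ring
  linarith [h, hring.ge, hring.le]
end

section
/- Let a > 0. For a 1-form u on the geodesic ball B_O(1) in H^2(-a^2) with components u₁, u₂ in the Poincaré disk chart Y, the pointwise estimate |∂u₁^♯/∂y¹| ≤ (4/(a²(1-|y|²)²))·(|∇u|_a ∘ Y^{-1}) + 4|y|·|u^♯|/(1-|y|²) holds on D₀(tanh(a/2)). -/
open Real

/-- The hyperbolic pointwise norm |∇u|ₐ in the chart: since the frame elements dYʲ⊗dYᵏ
have hyperbolic norm a²(1-|y|²)²/4, we have |∇u|ₐ = (a²(1-|y|²)²/4)·√(Σᵢⱼ covᵢⱼ²). -/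
noncomputable def covNorm (a : ℝ) (u₁ u₂ : ℝ × ℝ → ℝ) (y : ℝ × ℝ) : ℝ :=
  (a ^ 2 * (1 - (y.1 ^ 2 + y.2 ^ 2)) ^ 2 / 4) *
    Real.sqrt ((cov11 u₁ u₂ y) ^ 2 + (cov12 u₁ u₂ y) ^ 2 +
      (cov21 u₁ u₂ y) ^ 2 + (cov22 u₁ u₂ y) ^ 2)

/-- Pointwise estimate on D₀(tanh(a/2)):
|∂u₁/∂y¹| ≤ (4/(a²(1-|y|²)²))·|∇u|ₐ + 4|y||u^♯|/(1-|y|²). -/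
theorem stmt_13 (a : ℝ) (ha : 0 < a) (u₁ u₂ : ℝ × ℝ → ℝ) (y : ℝ × ℝ)
    (hy : y.1 ^ 2 + y.2 ^ 2 < Real.tanh (a / 2) ^ 2)
    (hd1 : DifferentiableAt ℝ u₁ y) (hd2 : DifferentiableAt ℝ u₂ y) :
    |pd1 u₁ y| ≤ (4 / (a ^ 2 * (1 - (y.1 ^ 2 + y.2 ^ 2)) ^ 2)) * covNorm a u₁ u₂ y
      + 4 * Real.sqrt (y.1 ^ 2 + y.2 ^ 2) *
          Real.sqrt ((u₁ y) ^ 2 + (u₂ y) ^ 2) / (1 - (y.1 ^ 2 + y.2 ^ 2)) := by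
  have ht1 : Real.tanh (a / 2) < 1 := by
    rw [Real.tanh_eq_sinh_div_cosh, div_lt_one (Real.cosh_pos _)]
    exact Real.sinh_lt_cosh _
  have ht2 : -1 < Real.tanh (a / 2) := by
    rw [Real.tanh_eq_sinh_div_cosh, lt_div_iff₀ (Real.cosh_pos _)]
    have h1 := Real.sinh_eq (a / 2)
    have h2 := Real.cosh_eq (a / 2)
    have h3 := Real.exp_pos (a / 2)
    have h4 := Real.exp_pos (-(a / 2))
    nlinarith
  have hr2 : y.1 ^ 2 + y.2 ^ 2 < 1 := lt_of_lt_of_le hy (by nlinarith)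
  have hr0 : 0 ≤ y.1 ^ 2 + y.2 ^ 2 := by positivity
  have hs : 0 < 1 - (y.1 ^ 2 + y.2 ^ 2) := by linarith
  have ha2 : (0:ℝ) < a ^ 2 * (1 - (y.1 ^ 2 + y.2 ^ 2)) ^ 2 := by positivity
  set X := (cov11 u₁ u₂ y) ^ 2 + (cov12 u₁ u₂ y) ^ 2 +
      (cov21 u₁ u₂ y) ^ 2 + (cov22 u₁ u₂ y) ^ 2 with hX
  have hcn : (4 / (a ^ 2 * (1 - (y.1 ^ 2 + y.2 ^ 2)) ^ 2)) * covNorm a u₁ u₂ y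
      = Real.sqrt X := by
    rw [covNorm]
    field_simp
    rw [← hX]
  have hkey : pd1 u₁ y = cov11 u₁ u₂ y
      + (2 * y.1 * u₁ y - 2 * y.2 * u₂ y) / (1 - (y.1 ^ 2 + y.2 ^ 2)) := by
    rw [cov11]; ring
  have h1 : |cov11 u₁ u₂ y| ≤ Real.sqrt X := by
    apply Real.abs_le_sqrt
    rw [hX]
    nlinarith [sq_nonneg (cov12 u₁ u₂ y), sq_nonneg (cov21 u₁ u₂ y), sq_nonneg (cov22 u₁ u₂ y)]
  have hxy : (0:ℝ) ≤ Real.sqrt (y.1 ^ 2 + y.2 ^ 2) * Real.sqrt ((u₁ y) ^ 2 + (u₂ y) ^ 2) := by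
    positivity
  have h2 : |2 * y.1 * u₁ y - 2 * y.2 * u₂ y|
      ≤ 2 * (Real.sqrt (y.1 ^ 2 + y.2 ^ 2) * Real.sqrt ((u₁ y) ^ 2 + (u₂ y) ^ 2)) := by
    have hq : (2 * y.1 * u₁ y - 2 * y.2 * u₂ y) ^ 2
        ≤ (2 * (Real.sqrt (y.1 ^ 2 + y.2 ^ 2) * Real.sqrt ((u₁ y) ^ 2 + (u₂ y) ^ 2))) ^ 2 := by
      have e1 : Real.sqrt (y.1 ^ 2 + y.2 ^ 2) ^ 2 = y.1 ^ 2 + y.2 ^ 2 := Real.sq_sqrt hr0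
      have e2 : Real.sqrt ((u₁ y) ^ 2 + (u₂ y) ^ 2) ^ 2 = (u₁ y) ^ 2 + (u₂ y) ^ 2 :=
        Real.sq_sqrt (by positivity)
      nlinarith [sq_nonneg (y.1 * u₂ y + y.2 * u₁ y)]
    exact abs_le.mpr (abs_le_of_sq_le_sq' hq (by linarith))
  rw [hcn, hkey]
  calc |cov11 u₁ u₂ y + (2 * y.1 * u₁ y - 2 * y.2 * u₂ y) / (1 - (y.1 ^ 2 + y.2 ^ 2))|
      ≤ |cov11 u₁ u₂ y| + |(2 * y.1 * u₁ y - 2 * y.2 * u₂ y) / (1 - (y.1 ^ 2 + y.2 ^ 2))| :=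
        abs_add_le _ _
    _ ≤ Real.sqrt X + 2 * (Real.sqrt (y.1 ^ 2 + y.2 ^ 2) * Real.sqrt ((u₁ y) ^ 2 + (u₂ y) ^ 2)) / (1 - (y.1 ^ 2 + y.2 ^ 2)) := by
        gcongr
        rw [abs_div, abs_of_pos hs, div_le_div_iff₀ hs hs]
        linarith [mul_le_mul_of_nonneg_right h2 hs.le]
    _ ≤ Real.sqrt X + 4 * Real.sqrt (y.1 ^ 2 + y.2 ^ 2) * Real.sqrt ((u₁ y) ^ 2 + (u₂ y) ^ 2) / (1 - (y.1 ^ 2 + y.2 ^ 2)) := by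
        have : 2 * (Real.sqrt (y.1 ^ 2 + y.2 ^ 2) * Real.sqrt ((u₁ y) ^ 2 + (u₂ y) ^ 2)) / (1 - (y.1 ^ 2 + y.2 ^ 2))
            ≤ 4 * Real.sqrt (y.1 ^ 2 + y.2 ^ 2) * Real.sqrt ((u₁ y) ^ 2 + (u₂ y) ^ 2) / (1 - (y.1 ^ 2 + y.2 ^ 2)) := by
          rw [div_le_div_iff₀ hs hs]
          linarith [mul_nonneg hxy hs.le]
        linarith
end
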